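/- arXiv:2105.14012 — 4 statements merged into one kernel-verified Lean document; each statement's English description precedes it below -/
import Mathlib

section
/- Let p be prime, a an integer of multiplicative order f modulo p, e = (p-1)/f, g a primitive root mod p, ζ = e^{2πi/p}, and η_i = Σ_{j=1}^{f} ζ^{g^i a^j}. Then Σ_{i=1}^{e} |η_i|² = p - f. -/
open Finset

private lemma shift_one' {M : Type*} [Monoid M] (A : M) (f : ℕ) (hA : A ^ f = 1)
    (F : M → ℂ) : ∑ j ∈ range f, F (A ^ (j + 1)) = ∑ j ∈ range f, F (A ^ j) := by
  cases f with
  | zero => simp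
  | succ n =>
    rw [Finset.sum_range_succ, Finset.sum_range_succ' (fun j => F (A ^ j))]
    rw [hA, pow_zero]

private lemma shift_sum' {M : Type*} [Monoid M] (A : M) (f : ℕ) (hA : A ^ f = 1) (r : ℕ) :
    ∀ F : M → ℂ, ∑ j ∈ range f, F (A ^ (j + r)) = ∑ j ∈ range f, F (A ^ j) := by
  induction r with
  | zero => simp
  | succ r ih =>
    intro F
    have h1 : ∀ j : ℕ, A ^ (j + (r + 1)) = A ^ (j + 1) * A ^ r := by
      intro j; rw [← pow_add]; ring_nf
    calc ∑ j ∈ range f, F (A ^ (j + (r + 1)))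
        = ∑ j ∈ range f, (fun x => F (x * A ^ r)) (A ^ (j + 1)) := by
          simp only [h1]
      _ = ∑ j ∈ range f, (fun x => F (x * A ^ r)) (A ^ j) := shift_one' A f hA (fun x => F (x * A ^ r))
      _ = ∑ j ∈ range f, F (A ^ (j + r)) := by
          simp only [← pow_add]
      _ = ∑ j ∈ range f, F (A ^ j) := ih F

private lemma icc_sum_eq_range_sum {M : Type*} [Monoid M] (A : M) (f : ℕ) (hA : A ^ f = 1)
    (F : M → ℂ) : ∑ j ∈ Icc 1 f, F (A ^ j) = ∑ j ∈ range f, F (A ^ j) := by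
  have h1 : Icc 1 f = Ico 1 (f + 1) := by rw [Finset.Ico_add_one_right_eq_Icc]
  rw [h1, Finset.sum_Ico_eq_sum_range]
  simp only [Nat.add_sub_cancel]
  calc ∑ j ∈ range f, F (A ^ (1 + j))
      = ∑ j ∈ range f, F (A ^ (j + 1)) := by simp_rw [add_comm]
    _ = ∑ j ∈ range f, F (A ^ j) := shift_one' A f hA F

theorem stmt6 (p : ℕ) (hp : p.Prime) (a : ℕ) (hpa : ¬ p ∣ a)
    (f : ℕ) (hf : f = orderOf (a : ZMod p)) (e : ℕ) (he : e = (p - 1) / f)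
    (g : ℕ) (hg : orderOf (g : ZMod p) = p - 1)
    (ζ : ℂ) (hζ : ζ = Complex.exp (2 * Real.pi * Complex.I / p))
    (η : ℕ → ℂ) (hη : ∀ i, η i = ∑ j ∈ Finset.Icc 1 f, ζ ^ (g ^ i * a ^ j)) :
    ∑ i ∈ Finset.Icc 1 e, ‖η i‖ ^ 2 = (p : ℝ) - f := by
  haveI : Fact p.Prime := ⟨hp⟩
  haveI : NeZero p := ⟨hp.ne_zero⟩
  have hp2 : 2 ≤ p := hp.two_le
  set A : ZMod p := (a : ZMod p) with hA
  set G : ZMod p := (g : ZMod p) with hG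
  have hA0 : A ≠ 0 := by
    rw [hA, Ne, ZMod.natCast_eq_zero_iff]
    exact hpa
  have hG0 : G ≠ 0 := by
    intro h
    rw [h] at hg
    have h0 : orderOf (0 : ZMod p) = 0 := by
      apply orderOf_eq_zero
      intro hfin
      obtain ⟨n, hn, hn1⟩ := isOfFinOrder_iff_pow_eq_one.mp hfin
      rw [zero_pow hn.ne'] at hn1
      exact one_ne_zero hn1.symm
    rw [h0] at hg
    omega
  have hAf : A ^ f = 1 := by rw [hf]; exact pow_orderOf_eq_one A
  have hfdvd : f ∣ p - 1 := by
    rw [hf]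
    exact orderOf_dvd_of_pow_eq_one (ZMod.pow_card_sub_one_eq_one hA0)
  have hfpos : 0 < f := by
    rw [hf]
    apply orderOf_pos_iff.mpr
    exact isOfFinOrder_iff_pow_eq_one.mpr ⟨p - 1, by omega, ZMod.pow_card_sub_one_eq_one hA0⟩
  have hef : e * f = p - 1 := by rw [he]; exact Nat.div_mul_cancel hfdvd
  have hepos : 0 < e := by
    rcases Nat.eq_zero_or_pos e with h | h
    · rw [h] at hef; simp at hef; omega
    · exact h
  -- the additive character
  set ψ : ZMod p → ℂ := fun x => ζ ^ x.val with hψ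
  have hζprim : IsPrimitiveRoot ζ p := by
    rw [hζ]; exact Complex.isPrimitiveRoot_exp p hp.ne_zero
  have hζp : ζ ^ p = 1 := hζprim.pow_eq_one
  have ψ_nat : ∀ n : ℕ, ζ ^ n = ψ (n : ZMod p) := by
    intro n
    rw [hψ]
    simp only [ZMod.val_natCast]
    conv_lhs => rw [← Nat.div_add_mod n p, pow_add, pow_mul, hζp, one_pow, one_mul]
  have ψ_add : ∀ x y : ZMod p, ψ (x + y) = ψ x * ψ y := by
    intro x y
    have h1 : ψ x * ψ y = ζ ^ (x.val + y.val) := by rw [hψ]; simp [pow_add]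
    rw [h1, ψ_nat]
    congr 1
    push_cast [ZMod.natCast_val, ZMod.cast_id]
    ring
  have ψ_zero : ψ 0 = 1 := by rw [hψ]; simp
  have ψ_abs : ∀ x, ‖ψ x‖ = 1 := by
    intro x
    have h1 : ‖ζ‖ = 1 := by
      rw [hζ]
      have : 2 * (Real.pi : ℂ) * Complex.I / p = ((2 * Real.pi / p : ℝ) : ℂ) * Complex.I := by
        push_cast; ring
      rw [this, Complex.norm_exp_ofReal_mul_I]
    rw [hψ]
    simp [map_pow, h1]
  have ψ_conj : ∀ x, (starRingEnd ℂ) (ψ x) = ψ (-x) := by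
    intro x
    have h1 : ψ x * ψ (-x) = 1 := by rw [← ψ_add]; simp [ψ_zero]
    have h2 : (ψ x)⁻¹ = (starRingEnd ℂ) (ψ x) := Complex.inv_eq_conj (ψ_abs x)
    rw [← h2]
    exact (eq_inv_of_mul_eq_one_right h1).symm
  have ψ_sum : ∑ x : ZMod p, ψ x = 0 := by
    have h1 : ∑ x : ZMod p, ψ x = ∑ n ∈ range p, ζ ^ n := by
      rw [hψ]
      apply Finset.sum_bij (fun (x : ZMod p) _ => x.val)
      · intro x _; exact Finset.mem_range.mpr (ZMod.val_lt x)
      · intro x _ y _ h; exact ZMod.val_injective p h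
      · intro n hn
        exact ⟨(n : ZMod p), Finset.mem_univ _, ZMod.val_natCast_of_lt (Finset.mem_range.mp hn)⟩
      · intro x _; rfl
    rw [h1]
    exact hζprim.geom_sum_eq_zero hp.one_lt
  have ψ_sum_mul : ∀ c : ZMod p, ∑ x : ZMod p, ψ (x * c) = if c = 0 then (p : ℂ) else 0 := by
    intro c
    by_cases hc : c = 0
    · simp [hc, ψ_zero, ZMod.card]
    · rw [if_neg hc, ← ψ_sum]
      exact Fintype.sum_equiv (Equiv.mulRight₀ c hc) _ _ (fun x => rfl)
  -- the key bijection sum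
  have hs_card : (Icc 1 e ×ˢ Icc 1 f).card = p - 1 := by
    rw [Finset.card_product, Nat.card_Icc, Nat.card_Icc]
    simp [hef]
  have hinj : Set.InjOn (fun pr : ℕ × ℕ => G ^ pr.1 * A ^ pr.2)
      ↑(Icc 1 e ×ˢ Icc 1 f) := by
    have hpowA : ∀ k k', 1 ≤ k → k ≤ f → 1 ≤ k' → k' ≤ f → A ^ k = A ^ k' → k = k' := by
      have base : ∀ k k', k ≤ k' → 1 ≤ k → k ≤ f → 1 ≤ k' → k' ≤ f → A ^ k = A ^ k' → k = k' := by
        intro k k' hkk' _ _ _ hk'f hAkk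
        have h1 : A ^ (k' - k) * A ^ k = 1 * A ^ k := by
          rw [← pow_add, one_mul]
          rw [Nat.sub_add_cancel hkk']
          exact hAkk.symm
        have h2 : A ^ (k' - k) = 1 := by
          have := mul_right_cancel₀ (pow_ne_zero k hA0) h1
          exact this
        have h3 : f ∣ k' - k := hf ▸ orderOf_dvd_of_pow_eq_one h2
        have h4 : k' - k < f := by omega
        have := Nat.eq_zero_of_dvd_of_lt h3 h4
        omega
      intro k k' hk1 hkf hk'1 hk'f hAkk
      rcases le_total k k' with h | h
      · exact base k k' h hk1 hkf hk'1 hk'f hAkk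
      · exact (base k' k h hk'1 hk'f hk1 hkf hAkk.symm).symm
    have key : ∀ (i i' k k' : ℕ), i ≤ i' →
        i ∈ Icc 1 e → i' ∈ Icc 1 e → k ∈ Icc 1 f → k' ∈ Icc 1 f →
        G ^ i * A ^ k = G ^ i' * A ^ k' → i = i' ∧ k = k' := by
      intro i i' k k' hii' hi hi' hk hk' heq
      simp only [Finset.mem_Icc] at hi hi' hk hk'
      have h1 : G ^ (i' - i) * A ^ k' * G ^ i = A ^ k * G ^ i := by
        rw [mul_right_comm, ← pow_add, Nat.sub_add_cancel hii']
        rw [← heq]; ring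
      have h2 : G ^ (i' - i) * A ^ k' = A ^ k :=
        mul_right_cancel₀ (pow_ne_zero i hG0) h1
      have hGd : G ^ (i' - i) = A ^ k / A ^ k' := by
        rw [eq_div_iff (pow_ne_zero _ hA0)]; exact h2
      have h3 : G ^ ((i' - i) * f) = 1 := by
        rw [pow_mul, hGd, div_pow, ← pow_mul, ← pow_mul, mul_comm k f, mul_comm k' f,
          pow_mul, pow_mul, hAf, one_pow, one_pow, div_one]
      have h4 : (p - 1) ∣ (i' - i) * f := hg ▸ orderOf_dvd_of_pow_eq_one h3
      rw [← hef] at h4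
      have h5 : e ∣ (i' - i) := by
        have := (Nat.mul_dvd_mul_iff_right hfpos).mp h4
        exact this
      have h6 : i' - i < e := by omega
      have h7 : i = i' := by have := Nat.eq_zero_of_dvd_of_lt h5 h6; omega
      subst h7
      simp only [Nat.sub_self, pow_zero, one_mul] at h2
      exact ⟨rfl, (hpowA k' k hk'.1 hk'.2 hk.1 hk.2 h2).symm⟩
    intro pr hpr pr' hpr' heq
    simp only [Finset.coe_product, Set.mem_prod, Finset.mem_coe] at hpr hpr'
    rcases le_total pr.1 pr'.1 with h | h
    · have := key pr.1 pr'.1 pr.2 pr'.2 h hpr.1 hpr'.1 hpr.2 hpr'.2 heq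
      exact Prod.ext this.1 this.2
    · have := key pr'.1 pr.1 pr'.2 pr.2 h hpr'.1 hpr.1 hpr'.2 hpr.2 heq.symm
      exact Prod.ext this.1.symm this.2.symm
  have himage : (Icc 1 e ×ˢ Icc 1 f).image (fun pr : ℕ × ℕ => G ^ pr.1 * A ^ pr.2)
      = Finset.univ.erase (0 : ZMod p) := by
    apply Finset.eq_of_subset_of_card_le
    · intro x hx
      simp only [Finset.mem_image] at hx
      obtain ⟨pr, _, hpr⟩ := hx
      rw [Finset.mem_erase]
      exact ⟨hpr ▸ mul_ne_zero (pow_ne_zero _ hG0) (pow_ne_zero _ hA0), Finset.mem_univ _⟩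
    · rw [Finset.card_erase_of_mem (Finset.mem_univ _), Finset.card_univ, ZMod.card,
        Finset.card_image_of_injOn hinj, hs_card]
  have hT : ∀ c : ZMod p,
      ∑ pr ∈ Icc 1 e ×ˢ Icc 1 f, ψ (G ^ pr.1 * A ^ pr.2 * c)
        = (if c = 0 then (p : ℂ) else 0) - 1 := by
    intro c
    have h1 : ∑ pr ∈ Icc 1 e ×ˢ Icc 1 f, ψ (G ^ pr.1 * A ^ pr.2 * c)
        = ∑ x ∈ (Icc 1 e ×ˢ Icc 1 f).image (fun pr : ℕ × ℕ => G ^ pr.1 * A ^ pr.2),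
            ψ (x * c) := by
      rw [Finset.sum_image (fun x hx y hy h => hinj hx hy h)]
    rw [h1, himage, Finset.sum_erase_eq_sub (Finset.mem_univ _), zero_mul, ψ_zero, ψ_sum_mul]
  -- expand the eta sums
  have hη' : ∀ i, η i = ∑ j ∈ Icc 1 f, ψ (G ^ i * A ^ j) := by
    intro i
    rw [hη]
    refine Finset.sum_congr rfl fun j _ => ?_
    rw [ψ_nat]
    push_cast
    rfl
  have hnormsq : ∀ i, ((‖η i‖ : ℂ)) ^ 2
      = ∑ j ∈ Icc 1 f, ∑ k ∈ Icc 1 f, ψ (G ^ i * A ^ j - G ^ i * A ^ k) := by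
    intro i
    have h1 : ((‖η i‖ : ℂ)) ^ 2 = η i * (starRingEnd ℂ) (η i) := by
      rw [Complex.mul_conj']
    rw [h1, hη' i, map_sum]
    rw [Finset.sum_mul_sum]
    refine Finset.sum_congr rfl fun j _ => Finset.sum_congr rfl fun k _ => ?_
    rw [ψ_conj, ← ψ_add, sub_eq_add_neg]
  -- the inner double sum over j
  have hinner : ∀ i k : ℕ, ∑ j ∈ Icc 1 f, ψ (G ^ i * A ^ j - G ^ i * A ^ k)
      = ∑ j ∈ range f, ψ (G ^ i * A ^ k * (A ^ j - 1)) := by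
    intro i k
    have h1 : ∑ j ∈ Icc 1 f, ψ (G ^ i * A ^ j - G ^ i * A ^ k)
        = ∑ j ∈ range f, (fun x => ψ (G ^ i * x - G ^ i * A ^ k)) (A ^ j) :=
      icc_sum_eq_range_sum A f hAf (fun x => ψ (G ^ i * x - G ^ i * A ^ k))
    have h2 : ∑ j ∈ range f, (fun x => ψ (G ^ i * x - G ^ i * A ^ k)) (A ^ j)
        = ∑ j ∈ range f, (fun x => ψ (G ^ i * x - G ^ i * A ^ k)) (A ^ (j + k)) :=
      (shift_sum' A f hAf k (fun x => ψ (G ^ i * x - G ^ i * A ^ k))).symm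
    rw [h1, h2]
    refine Finset.sum_congr rfl fun j _ => ?_
    simp only [pow_add]
    ring_nf
  -- main computation
  have main : ∑ i ∈ Icc 1 e, ((‖η i‖ : ℂ)) ^ 2 = (p : ℂ) - f := by
    calc ∑ i ∈ Icc 1 e, ((‖η i‖ : ℂ)) ^ 2
        = ∑ i ∈ Icc 1 e, ∑ k ∈ Icc 1 f, ∑ j ∈ Icc 1 f,
            ψ (G ^ i * A ^ j - G ^ i * A ^ k) := by
          refine Finset.sum_congr rfl fun i _ => ?_
          rw [hnormsq i, Finset.sum_comm]
      _ = ∑ i ∈ Icc 1 e, ∑ k ∈ Icc 1 f, ∑ j ∈ range f,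
            ψ (G ^ i * A ^ k * (A ^ j - 1)) := by
          refine Finset.sum_congr rfl fun i _ => Finset.sum_congr rfl fun k _ => hinner i k
      _ = ∑ j ∈ range f, ∑ i ∈ Icc 1 e, ∑ k ∈ Icc 1 f,
            ψ (G ^ i * A ^ k * (A ^ j - 1)) := by
          rw [show (∑ i ∈ Icc 1 e, ∑ k ∈ Icc 1 f, ∑ j ∈ range f,
                ψ (G ^ i * A ^ k * (A ^ j - 1)))
              = ∑ i ∈ Icc 1 e, ∑ j ∈ range f, ∑ k ∈ Icc 1 f,
                ψ (G ^ i * A ^ k * (A ^ j - 1)) from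
            Finset.sum_congr rfl fun i _ => Finset.sum_comm]
          exact Finset.sum_comm
      _ = ∑ j ∈ range f, ∑ pr ∈ Icc 1 e ×ˢ Icc 1 f,
            ψ (G ^ pr.1 * A ^ pr.2 * (A ^ j - 1)) := by
          refine Finset.sum_congr rfl fun j _ => ?_
          rw [Finset.sum_product]
      _ = ∑ j ∈ range f, ((if (A ^ j - 1 : ZMod p) = 0 then (p : ℂ) else 0) - 1) := by
          refine Finset.sum_congr rfl fun j _ => hT _
      _ = (∑ j ∈ range f, (if (A ^ j - 1 : ZMod p) = 0 then (p : ℂ) else 0)) - f := by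
          rw [Finset.sum_sub_distrib]
          simp
      _ = (p : ℂ) - f := by
          congr 1
          rw [Finset.sum_eq_single_of_mem 0 (Finset.mem_range.mpr hfpos)]
          · simp
          · intro j hj hj0
            rw [if_neg]
            intro hcon
            have h1 : A ^ j = 1 := by
              have := sub_eq_zero.mp hcon
              exact this
            have h2 : f ∣ j := hf ▸ orderOf_dvd_of_pow_eq_one h1
            have h3 : j < f := Finset.mem_range.mp hj
            exact hj0 (Nat.eq_zero_of_dvd_of_lt h2 h3)
  -- conclude
  have hfinal : ((∑ i ∈ Icc 1 e, ‖η i‖ ^ 2 : ℝ) : ℂ)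
      = (((p : ℝ) - f : ℝ) : ℂ) := by
    push_cast
    exact main
  exact_mod_cast hfinal
end

section
/- Let p be prime, a an integer of multiplicative order f modulo p, ζ = e^{2πi/p}, and for m in [1,p-1] let h_m be the representative in [1,p-1] of m·f mod p, and η_{h_m} = Σ_{j=1}^{f} ζ^{h_m a^j}. Then for any k with 1 ≤ k ≤ p−1, |Σ_{m=1}^{k} η_{h_m}| ≤ Σ_{j=1}^{f} |sin(π a^j f k / p) / sin(π a^j f / p)|. -/
open Complex in
lemma aux_abs_exp_sub_one (θ : ℝ) :
    ‖Complex.exp (θ * Complex.I) - 1‖ = 2 * |Real.sin (θ / 2)| := by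
  have key : Complex.exp (θ * Complex.I) - 1 =
      Complex.exp ((θ/2 : ℝ) * Complex.I) * (2 * Complex.sin ((θ/2 : ℝ)) * Complex.I) := by
    rw [Complex.sin]
    have hne : Complex.exp ((θ/2 : ℝ) * Complex.I) ≠ 0 := Complex.exp_ne_zero _
    rw [neg_mul, Complex.exp_neg]
    field_simp
    have h2 : Complex.exp (θ * Complex.I) = Complex.exp ((θ/2 : ℝ) * Complex.I) ^ 2 := by
      rw [← Complex.exp_nat_mul]; congr 1; push_cast; ring
    rw [h2, mul_comm Complex.I ((θ/2 : ℝ) : ℂ), Complex.I_sq]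
    ring
  rw [key, norm_mul, Complex.norm_exp_ofReal_mul_I, one_mul, norm_mul, norm_mul,
    Complex.norm_I, mul_one, Complex.norm_two, ← Complex.ofReal_sin, Complex.norm_real, Real.norm_eq_abs]

theorem stmt13 (p : ℕ) (hp : p.Prime) (a : ℕ) (hpa : ¬ p ∣ a)
    (f : ℕ) (hf : f = orderOf (a : ZMod p))
    (ζ : ℂ) (hζ : ζ = Complex.exp (2 * Real.pi * Complex.I / p))
    (h : ℕ → ℕ) (hh : ∀ m, h m = m * f % p)
    (η : ℕ → ℂ) (hη : ∀ t, η t = ∑ j ∈ Finset.Icc 1 f, ζ ^ (t * a ^ j))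
    (k : ℕ) (hk1 : 1 ≤ k) (hk2 : k ≤ p - 1) :
    ‖∑ m ∈ Finset.Icc 1 k, η (h m)‖ ≤
      ∑ j ∈ Finset.Icc 1 f,
        |Real.sin (Real.pi * a ^ j * f * k / p) / Real.sin (Real.pi * a ^ j * f / p)| := by
  have hp0 : p ≠ 0 := hp.pos.ne'
  have hprim : IsPrimitiveRoot ζ p := hζ ▸ Complex.isPrimitiveRoot_exp p hp0
  have hzp : ζ ^ p = 1 := hprim.pow_eq_one
  have hmod : ∀ s t : ℕ, s % p = t % p → ζ ^ s = ζ ^ t := by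
    have key : ∀ s : ℕ, ζ ^ s = ζ ^ (s % p) := by
      intro s
      conv_lhs => rw [← Nat.div_add_mod s p]
      rw [pow_add, pow_mul, hzp, one_pow, one_mul]
    intro s t hst
    rw [key s, key t, hst]
  -- f is positive and at most p - 1
  have ha0 : (a : ZMod p) ≠ 0 := by
    rw [Ne, ZMod.natCast_eq_zero_iff]; exact hpa
  have hfin : IsOfFinOrder (a : ZMod p) := by
    refine isOfFinOrder_iff_pow_eq_one.mpr ⟨p - 1, ?_, ?_⟩
    · omega
    · haveI : Fact p.Prime := ⟨hp⟩
      exact ZMod.pow_card_sub_one_eq_one ha0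
  have hf0 : 0 < f := hf ▸ hfin.orderOf_pos
  have hfd : f ∣ p - 1 := by
    haveI : Fact p.Prime := ⟨hp⟩
    exact hf ▸ orderOf_dvd_of_pow_eq_one (ZMod.pow_card_sub_one_eq_one ha0)
  have hflt : f < p := lt_of_le_of_lt (Nat.le_of_dvd (by omega) hfd) (by omega)
  have hpf : ∀ j : ℕ, ¬ p ∣ f * a ^ j := by
    intro j hd
    rcases (Nat.Prime.dvd_mul hp).mp hd with h1 | h1
    · exact absurd (Nat.le_of_dvd hf0 h1) (by omega)
    · exact hpa (hp.dvd_of_dvd_pow h1)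
  -- swap sums
  have hswap : ∑ m ∈ Finset.Icc 1 k, η (h m)
      = ∑ j ∈ Finset.Icc 1 f, ∑ m ∈ Finset.Icc 1 k, (ζ ^ (f * a ^ j)) ^ m := by
    simp only [hη, hh]
    rw [Finset.sum_comm]
    refine Finset.sum_congr rfl fun j _ => Finset.sum_congr rfl fun m _ => ?_
    rw [← pow_mul]
    apply hmod
    have : m * f % p * a ^ j ≡ f * a ^ j * m [MOD p] := by
      calc m * f % p * a ^ j ≡ m * f * a ^ j [MOD p] :=
            Nat.ModEq.mul_right _ (Nat.mod_modEq _ _)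
        _ = f * a ^ j * m := by ring
    exact this
  rw [hswap]
  refine le_trans (norm_sum_le _ _) (Finset.sum_le_sum fun j _ => le_of_eq ?_)
  -- per-term computation
  set n : ℕ := f * a ^ j with hn
  set z : ℂ := ζ ^ n with hzdef
  have hz1 : z ≠ 1 := fun hc => hpf j ((hprim.pow_eq_one_iff_dvd n).mp hc)
  have hzexp : z = Complex.exp ((2 * Real.pi * n / p : ℝ) * Complex.I) := by
    rw [hzdef, hζ, ← Complex.exp_nat_mul]
    congr 1
    push_cast
    ring
  have hzkexp : z ^ k = Complex.exp ((2 * Real.pi * n * k / p : ℝ) * Complex.I) := by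
    rw [hzexp, ← Complex.exp_nat_mul]
    congr 1
    push_cast
    ring
  have hsum : ∑ m ∈ Finset.Icc 1 k, z ^ m = z * ((z ^ k - 1) / (z - 1)) := by
    rw [← geom_sum_eq hz1 k, Finset.mul_sum, ← Finset.Ico_add_one_right_eq_Icc,
      Finset.sum_Ico_eq_sum_range]
    simp [pow_add, pow_succ, mul_comm]
  have habs1 : ‖z - 1‖ = 2 * |Real.sin (Real.pi * n / p)| := by
    rw [hzexp, aux_abs_exp_sub_one]
    congr 2
    ring
  have habsk : ‖z ^ k - 1‖ = 2 * |Real.sin (Real.pi * n * k / p)| := by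
    rw [hzkexp, aux_abs_exp_sub_one]
    congr 2
    ring
  have habsz : ‖z‖ = 1 := by rw [hzexp]; exact Complex.norm_exp_ofReal_mul_I _
  rw [hsum, norm_mul, norm_div, habsz, one_mul, habs1, habsk, abs_div]
  rw [mul_div_mul_left _ _ (two_ne_zero)]
  have e1 : Real.pi * n * k / p = Real.pi * a ^ j * f * k / p := by
    rw [hn]; push_cast; ring
  have e2 : Real.pi * n / p = Real.pi * a ^ j * f / p := by
    rw [hn]; push_cast; ring
  rw [e1, e2]
end

section
/- Let p be prime, a of multiplicative order f modulo p, e = (p−1)/f, g a primitive root mod p, ζ = e^{2πi/p}, and η_i = Σ_{j=1}^{f} ζ^{g^i a^j}. Then Σ_{g_i=1}^{p−1} ζ^{−g_i} η_{i}, where the sum runs over all elements g_i of (ℤ/pℤ)* with η indexed by the coset of g_i, equals Σ_{i=1}^{e} |η_i|² = p − f. -/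
open Finset

private lemma shift_one (f : ℕ) (hf : 1 ≤ f) (ψ : ℕ → ℂ)
    (hψ : ∀ x, ψ (x + f) = ψ x) :
    ∑ j ∈ Icc 1 f, ψ (j + 1) = ∑ j ∈ Icc 1 f, ψ j := by
  have h1 : ∑ j ∈ Icc 1 f, ψ (j + 1) = ∑ j ∈ Icc 2 (f + 1), ψ j := by
    rw [← Finset.map_add_right_Icc 1 f 1, Finset.sum_map]
    rfl
  have h2 : Icc 2 (f + 1) = insert (f + 1) (Icc 2 f) := by
    ext x; simp only [Finset.mem_Icc, Finset.mem_insert]; omega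
  have h3 : Icc 1 f = insert 1 (Icc 2 f) := by
    ext x; simp only [Finset.mem_Icc, Finset.mem_insert]; omega
  rw [h1, h2, h3, Finset.sum_insert (by simp), Finset.sum_insert (by simp [Finset.mem_Icc])]
  congr 1
  simpa [Nat.add_comm] using hψ 1

private lemma shift_many (f : ℕ) (hf : 1 ≤ f) (ψ : ℕ → ℂ)
    (hψ : ∀ x, ψ (x + f) = ψ x) (m : ℕ) :
    ∑ j ∈ Icc 1 f, ψ (j + m) = ∑ j ∈ Icc 1 f, ψ j := by
  induction m with
  | zero => simp
  | succ m ih =>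
    have key := shift_one f hf (fun x => ψ (x + m)) (fun x => by
      rw [Nat.add_right_comm]
      exact hψ (x + m))
    calc ∑ j ∈ Icc 1 f, ψ (j + (m + 1)) = ∑ j ∈ Icc 1 f, ψ (j + 1 + m) := by
          apply Finset.sum_congr rfl; intro j _; congr 1; omega
      _ = ∑ j ∈ Icc 1 f, ψ (j + m) := key
      _ = ∑ j ∈ Icc 1 f, ψ j := ih

private lemma geom_aux (p : ℕ) (hp : p.Prime) (ζ : ℂ) (hz : IsPrimitiveRoot ζ p) (m : ℕ) :
    ∑ k ∈ Icc 1 (p - 1), (ζ ^ m) ^ k = if p ∣ m then ((p : ℂ) - 1) else -1 := by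
  have hp1 : 1 < p := hp.one_lt
  have hIcc : Icc 1 (p - 1) = Ico 1 p := by
    ext x; simp only [Finset.mem_Icc, Finset.mem_Ico]; omega
  by_cases h : p ∣ m
  · rw [if_pos h, (hz.pow_eq_one_iff_dvd m).2 h]
    simp only [one_pow, Finset.sum_const, Nat.card_Icc, nsmul_eq_mul, mul_one]
    have : p - 1 + 1 - 1 = p - 1 := by omega
    rw [this, Nat.cast_sub hp.one_le, Nat.cast_one]
  · rw [if_neg h]
    have hcop : m.Coprime p := (Nat.Prime.coprime_iff_not_dvd hp).2 h |>.symm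
    have hw : IsPrimitiveRoot (ζ ^ m) p := hz.pow_of_coprime m hcop
    have h0 : ∑ k ∈ range p, (ζ ^ m) ^ k = 0 := hw.geom_sum_eq_zero hp1
    rw [Finset.range_eq_Ico,
      Finset.sum_eq_sum_Ico_succ_bot (by omega : 0 < p) (fun k => (ζ ^ m) ^ k)] at h0
    rw [hIcc]
    norm_num at h0 ⊢
    linear_combination h0

theorem stmt15 (p : ℕ) (hp : p.Prime) (a : ℕ) (hpa : ¬ p ∣ a)
    (f : ℕ) (hf : f = orderOf (a : ZMod p)) (e : ℕ) (he : e = (p - 1) / f)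
    (g : ℕ) (hg : orderOf (g : ZMod p) = p - 1)
    (ζ : ℂ) (hζ : ζ = Complex.exp (2 * Real.pi * Complex.I / p))
    (η : ℕ → ℂ) (hη : ∀ i, η i = ∑ j ∈ Finset.Icc 1 f, ζ ^ (g ^ i * a ^ j)) :
    (∑ k ∈ Finset.Icc 1 (p - 1), ζ ^ (-(k : ℤ)) * ∑ j ∈ Finset.Icc 1 f, ζ ^ (a ^ j * k))
        = (p : ℂ) - f ∧
    ∑ i ∈ Finset.Icc 1 e, ‖η i‖ ^ 2 = (p : ℝ) - f := by
  haveI : Fact p.Prime := ⟨hp⟩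
  have hp1 : 1 < p := hp.one_lt
  have hz : IsPrimitiveRoot ζ p := by
    rw [hζ]; exact Complex.isPrimitiveRoot_exp p hp.pos.ne'
  have hzp : ζ ^ p = 1 := hz.pow_eq_one
  have hzmod : ∀ n : ℕ, ζ ^ n = ζ ^ (n % p) := by
    intro n
    conv_lhs => rw [← Nat.div_add_mod n p]
    rw [pow_add, pow_mul, hzp, one_pow, one_mul]
  have hzcong : ∀ {n n' : ℕ}, (n : ZMod p) = (n' : ZMod p) → ζ ^ n = ζ ^ n' := by
    intro n n' h
    rw [hzmod n, hzmod n', (ZMod.natCast_eq_natCast_iff _ _ _).1 h]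
  have hnorm : ‖ζ‖ = 1 := by
    have h1 : ‖ζ‖ ^ p = 1 := by rw [← norm_pow, hzp, norm_one]
    rcases lt_trichotomy ‖ζ‖ 1 with h | h | h
    · have := pow_lt_one₀ (norm_nonneg ζ) h hp.pos.ne'
      rw [h1] at this; exact absurd this (lt_irrefl 1)
    · exact h
    · have := one_lt_pow₀ h hp.pos.ne'
      rw [h1] at this; exact absurd this (lt_irrefl 1)
  have hconj : ∀ n : ℕ, ζ ^ (-(n : ℤ)) = starRingEnd ℂ (ζ ^ n) := by
    intro n
    rw [zpow_neg, zpow_natCast, Complex.inv_eq_conj (by rw [norm_pow, hnorm, one_pow])]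
  have hconjmul : ∀ n : ℕ, starRingEnd ℂ (ζ ^ n) * ζ ^ n = 1 := by
    intro n
    have hns : Complex.normSq (ζ ^ n) = 1 := by
      rw [Complex.normSq_eq_norm_sq, norm_pow, hnorm]; norm_num
    rw [← Complex.normSq_eq_conj_mul_self, hns, Complex.ofReal_one]
  -- units and orders
  have ha0 : 0 < a := by
    rcases Nat.eq_zero_or_pos a with h | h
    · exact absurd (h ▸ dvd_zero p) hpa
    · exact h
  have hau : IsUnit (a : ZMod p) := by
    rw [isUnit_iff_ne_zero, Ne, ZMod.natCast_eq_zero_iff]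
    exact hpa
  obtain ⟨u, hu⟩ := hau
  have hgu : IsUnit (g : ZMod p) := by
    rw [isUnit_iff_ne_zero]
    intro h0
    have := pow_orderOf_eq_one (g : ZMod p)
    rw [hg, h0, zero_pow (by omega : p - 1 ≠ 0)] at this
    exact zero_ne_one this
  obtain ⟨v, hv⟩ := hgu
  have hordu : orderOf u = f := by rw [hf, ← hu, orderOf_units]
  have hordv : orderOf v = p - 1 := by rw [← hg, ← hv, orderOf_units]
  have hcard : Fintype.card (ZMod p)ˣ = p - 1 := by
    rw [ZMod.card_units_eq_totient, Nat.totient_prime hp]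
  have hfd : f ∣ p - 1 := by rw [← hordu, ← hcard]; exact orderOf_dvd_card
  have hf1 : 1 ≤ f := hordu ▸ orderOf_pos u
  have hef : e * f = p - 1 := by rw [he]; exact Nat.div_mul_cancel hfd
  have hafp : (a : ZMod p) ^ f = 1 := by rw [hf]; exact pow_orderOf_eq_one _
  have haf : ∀ x : ℕ, (a : ZMod p) ^ (x + f) = (a : ZMod p) ^ x := by
    intro x; rw [pow_add, hafp, mul_one]
  -- the common summand
  set D : ℕ → ℂ := fun k => starRingEnd ℂ (ζ ^ k) * ∑ j ∈ Icc 1 f, ζ ^ (a ^ j * k) with hD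
  have hDcong : ∀ {k k' : ℕ}, (k : ZMod p) = (k' : ZMod p) → D k = D k' := by
    intro k k' h
    simp only [hD]
    congr 1
    · exact congrArg _ (hzcong h)
    · apply Finset.sum_congr rfl
      intro j _
      apply hzcong
      push_cast
      rw [h]
  -- Part 1 : the sum over Icc 1 (p-1)
  have hS : ∑ k ∈ Icc 1 (p - 1), D k = (p : ℂ) - f := by
    have step1 : ∀ k ∈ Icc 1 (p - 1), D k = ∑ j ∈ Icc 1 f, (ζ ^ (a ^ j - 1)) ^ k := by
      intro k hk
      simp only [hD, Finset.mul_sum]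
      apply Finset.sum_congr rfl
      intro j _
      have ha1 : 1 ≤ a ^ j := Nat.one_le_pow j a ha0
      have hsplit : a ^ j * k = (a ^ j - 1) * k + k := by
        rw [← Nat.sub_add_cancel ha1, Nat.add_mul, one_mul, Nat.sub_add_cancel ha1]
      rw [hsplit, pow_add, ← mul_assoc, mul_comm (starRingEnd ℂ (ζ ^ k)) _, mul_assoc,
        hconjmul k, mul_one, pow_mul]
    rw [Finset.sum_congr rfl step1, Finset.sum_comm]
    have hdvd_iff : ∀ j, 1 ≤ j → j ≤ f → (p ∣ a ^ j - 1 ↔ j = f) := by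
      intro j h1 h2
      have ha1 : 1 ≤ a ^ j := Nat.one_le_pow j a ha0
      have hcast : ((a ^ j - 1 : ℕ) : ZMod p) = (a : ZMod p) ^ j - 1 := by
        rw [Nat.cast_sub ha1]; push_cast; ring
      constructor
      · intro hdvd
        have : ((a ^ j - 1 : ℕ) : ZMod p) = 0 := (ZMod.natCast_eq_zero_iff _ _).2 hdvd
        rw [hcast, sub_eq_zero] at this
        have hfj : f ∣ j := hf ▸ orderOf_dvd_of_pow_eq_one this
        exact Nat.le_antisymm h2 (Nat.le_of_dvd (by omega) hfj)
      · intro hj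
        subst hj
        apply (ZMod.natCast_eq_zero_iff _ _).1
        rw [hcast, hafp, sub_self]
    have inner : ∀ j ∈ Icc 1 f, ∑ k ∈ Icc 1 (p - 1), (ζ ^ (a ^ j - 1)) ^ k
        = (if j = f then (p : ℂ) else 0) + (-1) := by
      intro j hj
      rw [Finset.mem_Icc] at hj
      rw [geom_aux p hp ζ hz (a ^ j - 1)]
      by_cases hjf : j = f
      · rw [if_pos ((hdvd_iff j hj.1 hj.2).2 hjf), if_pos hjf]; ring
      · rw [if_neg (fun hdvd => hjf ((hdvd_iff j hj.1 hj.2).1 hdvd)), if_neg hjf]; ring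
    rw [Finset.sum_congr rfl inner, Finset.sum_add_distrib, Finset.sum_ite_eq',
      if_pos (by rw [Finset.mem_Icc]; omega), Finset.sum_const, Nat.card_Icc]
    have : f + 1 - 1 = f := by omega
    rw [this]
    push_cast
    ring
  -- Part 2 term identity
  have hterm : ∀ i j : ℕ, starRingEnd ℂ (ζ ^ (g ^ i * a ^ j)) * η i = D (g ^ i * a ^ j) := by
    intro i j
    simp only [hD]
    congr 1
    rw [hη i]
    have hexp : ∀ j' : ℕ, a ^ j' * (g ^ i * a ^ j) = g ^ i * a ^ (j' + j) := by
      intro j'; rw [pow_add]; ring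
    have hper : ∀ x : ℕ, ζ ^ (g ^ i * a ^ (x + f)) = ζ ^ (g ^ i * a ^ x) := by
      intro x
      apply hzcong
      push_cast
      rw [haf x]
    calc ∑ j' ∈ Icc 1 f, ζ ^ (g ^ i * a ^ j')
        = ∑ j' ∈ Icc 1 f, (fun x => ζ ^ (g ^ i * a ^ x)) (j' + j) :=
          (shift_many f hf1 (fun x => ζ ^ (g ^ i * a ^ x)) hper j).symm
      _ = ∑ j' ∈ Icc 1 f, ζ ^ (a ^ j' * (g ^ i * a ^ j)) := by
          apply Finset.sum_congr rfl; intro j' _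
          simp only []
          rw [hexp j']
  have hT : ∑ i ∈ Icc 1 e, (η i * starRingEnd ℂ (η i))
      = ∑ x ∈ Icc 1 e ×ˢ Icc 1 f, D (g ^ x.1 * a ^ x.2) := by
    rw [Finset.sum_product]
    apply Finset.sum_congr rfl
    intro i _
    have hconjη : starRingEnd ℂ (η i) = ∑ j ∈ Icc 1 f, starRingEnd ℂ (ζ ^ (g ^ i * a ^ j)) := by
      rw [hη i, map_sum]
    rw [hconjη, Finset.mul_sum]
    exact Finset.sum_congr rfl fun j hj => by rw [mul_comm]; exact hterm i j
  -- the bijection (i,j) ↦ g^i a^j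
  have hinjU : Set.InjOn (fun x : ℕ × ℕ => v ^ x.1 * u ^ x.2)
      ((Icc 1 e ×ˢ Icc 1 f : Finset (ℕ × ℕ)) : Set (ℕ × ℕ)) := by
    rintro ⟨i, j⟩ hij ⟨i', j'⟩ hij' hEq
    simp only [Finset.coe_product, Set.mem_prod, Finset.mem_coe, Finset.mem_Icc] at hij hij'
    simp only [] at hEq
    have h1 : v ^ (i : ℤ) * u ^ (j : ℤ) = v ^ (i' : ℤ) * u ^ (j' : ℤ) := by
      rw [zpow_natCast, zpow_natCast, zpow_natCast, zpow_natCast]; exact hEq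
    have h2 : v ^ ((i : ℤ) - i') = u ^ ((j' : ℤ) - j) := by
      rw [zpow_sub, zpow_sub, ← div_eq_mul_inv, ← div_eq_mul_inv,
        div_eq_div_iff_mul_eq_mul, h1, mul_comm]
    have huf : u ^ (f : ℤ) = 1 := by
      rw [zpow_natCast, ← hordu]; exact pow_orderOf_eq_one u
    have h3 : v ^ (((i : ℤ) - i') * f) = 1 := by
      rw [zpow_mul, h2, ← zpow_mul, mul_comm, zpow_mul, huf, one_zpow]
    have h4 : ((e * f : ℕ) : ℤ) ∣ ((i : ℤ) - i') * f := by
      rw [hef, ← hordv]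
      exact orderOf_dvd_iff_zpow_eq_one.2 h3
    have h5 : (e : ℤ) ∣ (i : ℤ) - i' := by
      have h4' : (e : ℤ) * f ∣ ((i : ℤ) - i') * f := by push_cast at h4; exact h4
      exact (mul_dvd_mul_iff_right (by exact_mod_cast (by omega : f ≠ 0) : (f : ℤ) ≠ 0)).1 h4'
    have hii : i = i' := by
      have h0 := Int.eq_zero_of_abs_lt_dvd h5 (by rw [abs_sub_lt_iff]; constructor <;> push_cast <;> omega)
      omega
    subst hii
    have h6 : u ^ ((j' : ℤ) - j) = 1 := by rw [← h2]; simp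
    have h7 : (f : ℤ) ∣ (j' : ℤ) - j := by
      rw [← hordu]
      exact_mod_cast orderOf_dvd_iff_zpow_eq_one.2 h6
    have hjj : j = j' := by
      have h0 := Int.eq_zero_of_abs_lt_dvd h7 (by rw [abs_sub_lt_iff]; constructor <;> push_cast <;> omega)
      omega
    simp [hjj]
  have hinjM : Set.InjOn (fun x : ℕ × ℕ => ((g : ZMod p) ^ x.1 * (a : ZMod p) ^ x.2))
      ((Icc 1 e ×ˢ Icc 1 f : Finset (ℕ × ℕ)) : Set (ℕ × ℕ)) := by
    intro x hx y hy hEq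
    apply hinjU hx hy
    apply Units.ext
    push_cast
    rw [hu, hv]
    exact hEq
  have hMunit : ∀ x : ℕ × ℕ, ((g : ZMod p) ^ x.1 * (a : ZMod p) ^ x.2) = ((v ^ x.1 * u ^ x.2 : (ZMod p)ˣ) : ZMod p) := by
    intro x; push_cast [hu, hv]; ring
  have himg : (Icc 1 e ×ˢ Icc 1 f).image (fun x : ℕ × ℕ => ((g : ZMod p) ^ x.1 * (a : ZMod p) ^ x.2))
      = (Finset.univ : Finset (ZMod p)).erase 0 := by
    apply Finset.eq_of_subset_of_card_le
    · intro x hx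
      rw [Finset.mem_image] at hx
      obtain ⟨y, _, rfl⟩ := hx
      rw [Finset.mem_erase]
      refine ⟨?_, Finset.mem_univ _⟩
      rw [hMunit y]
      exact Units.ne_zero _
    · rw [Finset.card_erase_of_mem (Finset.mem_univ _), Finset.card_univ, ZMod.card,
        Finset.card_image_of_injOn hinjM, Finset.card_product, Nat.card_Icc, Nat.card_Icc]
      simp only [Nat.add_sub_cancel]
      omega
  have hsum1 : ∑ x ∈ Icc 1 e ×ˢ Icc 1 f, D (g ^ x.1 * a ^ x.2)
      = ∑ w ∈ (Finset.univ : Finset (ZMod p)).erase 0, D w.val := by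
    rw [← himg, Finset.sum_image hinjM]
    apply Finset.sum_congr rfl
    intro x _
    apply hDcong
    rw [ZMod.natCast_val, ZMod.cast_id]
    push_cast
    ring
  have hsum2 : ∑ k ∈ Icc 1 (p - 1), D k
      = ∑ w ∈ (Finset.univ : Finset (ZMod p)).erase 0, D w.val := by
    refine Finset.sum_nbij' (fun k => (k : ZMod p)) (fun w => w.val) ?_ ?_ ?_ ?_ ?_
    · intro k hk
      rw [Finset.mem_Icc] at hk
      rw [Finset.mem_erase]
      refine ⟨?_, Finset.mem_univ _⟩
      rw [Ne, ZMod.natCast_eq_zero_iff]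
      intro hdvd
      have := Nat.le_of_dvd (by omega) hdvd
      omega
    · intro w hw
      rw [Finset.mem_erase] at hw
      show w.val ∈ Icc 1 (p - 1)
      rw [Finset.mem_Icc]
      have h1 : w.val < p := ZMod.val_lt w
      have h2 : w.val ≠ 0 := fun h0 => hw.1 (by rwa [← ZMod.val_eq_zero])
      omega
    · intro k hk
      rw [Finset.mem_Icc] at hk
      exact ZMod.val_cast_of_lt (by omega)
    · intro w _
      show ((w.val : ℕ) : ZMod p) = w
      rw [ZMod.natCast_val, ZMod.cast_id]
    · intro k hk
      show D k = D (((k : ZMod p)).val)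
      apply hDcong
      rw [ZMod.natCast_val, ZMod.cast_id]
  -- assemble
  constructor
  · calc ∑ k ∈ Icc 1 (p - 1), ζ ^ (-(k : ℤ)) * ∑ j ∈ Icc 1 f, ζ ^ (a ^ j * k)
        = ∑ k ∈ Icc 1 (p - 1), D k := by
          apply Finset.sum_congr rfl; intro k _
          simp only [hD]
          rw [hconj k]
      _ = (p : ℂ) - f := hS
  · have hcomplex : ((∑ i ∈ Icc 1 e, ‖η i‖ ^ 2 : ℝ) : ℂ) = (p : ℂ) - f := by
      rw [Complex.ofReal_sum]
      have : ∀ i ∈ Icc 1 e, ((‖η i‖ ^ 2 : ℝ) : ℂ) = η i * starRingEnd ℂ (η i) := by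
        intro i _
        rw [Complex.sq_norm, Complex.mul_conj]
      rw [Finset.sum_congr rfl this, hT, hsum1, ← hsum2, hS]
    exact_mod_cast hcomplex
end

section
/- Let x ≥ 2 be a real number, a > 1 an integer, and for each prime p ≤ x coprime to a let f_a(p) be the multiplicative order of a modulo p. Then Σ_{p ≤ x} 1/f_a(p) ≤ Σ_{j < x} ω_x(a^j − 1)/j + Σ_{p ≤ x, f_a(p) ≥ x} 1/f_a(p), where ω_x(m) counts the distinct primes p ≤ x dividing m; in particular Σ_{p ≤ x, f_a(p) < x} 1/f_a(p) ≤ Σ_{j < x} ω_x(a^j − 1)/j. -/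
theorem stmt19 (a : ℤ) (ha : 1 < a) (x : ℝ) (hx : 2 ≤ x)
    (ω : ℤ → ℕ)
    (hω : ∀ m, ω m = ((Finset.range (⌊x⌋₊ + 1)).filter
      (fun p : ℕ => p.Prime ∧ (p : ℤ) ∣ m)).card)
    (P : Finset ℕ)
    (hP : P = (Finset.range (⌊x⌋₊ + 1)).filter
      (fun p : ℕ => p.Prime ∧ ¬ (p : ℤ) ∣ a)) :
    (∑ p ∈ P, (1 : ℝ) / (orderOf (a : ZMod p)) ≤
      (∑ j ∈ (Finset.Icc 1 ⌈x⌉₊).filter (fun j : ℕ => (j : ℝ) < x),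
        (ω (a ^ j - 1) : ℝ) / j) +
      ∑ p ∈ P.filter (fun p => x ≤ (orderOf (a : ZMod p) : ℝ)),
        (1 : ℝ) / (orderOf (a : ZMod p))) ∧
    ∑ p ∈ P.filter (fun p => (orderOf (a : ZMod p) : ℝ) < x),
        (1 : ℝ) / (orderOf (a : ZMod p)) ≤
      ∑ j ∈ (Finset.Icc 1 ⌈x⌉₊).filter (fun j : ℕ => (j : ℝ) < x),
        (ω (a ^ j - 1) : ℝ) / j := by
  have hpos : ∀ p ∈ P, 0 < orderOf (a : ZMod p) := by
    intro p hp
    rw [hP, Finset.mem_filter] at hp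
    obtain ⟨_, hprime, hndvd⟩ := hp
    haveI : Fact p.Prime := ⟨hprime⟩
    have hne : (a : ZMod p) ≠ 0 := by
      simpa [ZMod.intCast_zmod_eq_zero_iff_dvd] using hndvd
    have : orderOf (a : ZMod p) = orderOf hne.isUnit.unit := by
      rw [← orderOf_units, IsUnit.unit_spec]
    rw [this]
    exact orderOf_pos _
  have key : ∑ p ∈ P.filter (fun p => (orderOf (a : ZMod p) : ℝ) < x),
        (1 : ℝ) / (orderOf (a : ZMod p)) ≤
      ∑ j ∈ (Finset.Icc 1 ⌈x⌉₊).filter (fun j : ℕ => (j : ℝ) < x),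
        (ω (a ^ j - 1) : ℝ) / j := by
    have hmaps : ∀ p ∈ P.filter (fun p => (orderOf (a : ZMod p) : ℝ) < x),
        orderOf (a : ZMod p) ∈ (Finset.Icc 1 ⌈x⌉₊).filter (fun j : ℕ => (j : ℝ) < x) := by
      intro p hp
      rw [Finset.mem_filter] at hp
      obtain ⟨hpP, hlt⟩ := hp
      have h1 := hpos p hpP
      rw [Finset.mem_filter, Finset.mem_Icc]
      refine ⟨⟨h1, ?_⟩, hlt⟩
      have : (orderOf (a : ZMod p) : ℝ) ≤ (⌈x⌉₊ : ℝ) := le_trans hlt.le (Nat.le_ceil x)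
      exact_mod_cast this
    rw [← Finset.sum_fiberwise_of_maps_to hmaps]
    apply Finset.sum_le_sum
    intro j hj
    rw [Finset.mem_filter, Finset.mem_Icc] at hj
    have hj1 : (1:ℝ) ≤ j := by exact_mod_cast hj.1.1
    have hcard : ((P.filter (fun p => (orderOf (a : ZMod p) : ℝ) < x)).filter
        (fun p => orderOf (a : ZMod p) = j)).card ≤ ω (a ^ j - 1) := by
      rw [hω]
      apply Finset.card_le_card
      intro p hp
      simp only [Finset.mem_filter] at hp ⊢
      obtain ⟨⟨hpP, _⟩, hord⟩ := hp
      rw [hP, Finset.mem_filter] at hpP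
      obtain ⟨hrange, hprime, _⟩ := hpP
      refine ⟨hrange, hprime, ?_⟩
      haveI : Fact p.Prime := ⟨hprime⟩
      have : ((a ^ j - 1 : ℤ) : ZMod p) = 0 := by
        push_cast
        rw [← hord, pow_orderOf_eq_one, sub_self]
      exact (ZMod.intCast_zmod_eq_zero_iff_dvd _ _).mp this
    calc ∑ p ∈ (P.filter (fun p => (orderOf (a : ZMod p) : ℝ) < x)).filter
            (fun p => orderOf (a : ZMod p) = j), (1:ℝ) / (orderOf (a : ZMod p))
        = ∑ p ∈ (P.filter (fun p => (orderOf (a : ZMod p) : ℝ) < x)).filter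
            (fun p => orderOf (a : ZMod p) = j), (1:ℝ) / j := by
          apply Finset.sum_congr rfl
          intro p hp
          rw [Finset.mem_filter] at hp
          rw [hp.2]
      _ = (((P.filter (fun p => (orderOf (a : ZMod p) : ℝ) < x)).filter
            (fun p => orderOf (a : ZMod p) = j)).card : ℝ) / j := by
          rw [Finset.sum_const, nsmul_eq_mul, mul_one_div]
      _ ≤ (ω (a ^ j - 1) : ℝ) / j := by
          gcongr
  refine ⟨?_, key⟩
  have hsplit := Finset.sum_filter_add_sum_filter_not P
    (fun p => (orderOf (a : ZMod p) : ℝ) < x) (fun p => (1:ℝ) / (orderOf (a : ZMod p)))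
  have heq : P.filter (fun p => ¬ (orderOf (a : ZMod p) : ℝ) < x)
      = P.filter (fun p => x ≤ (orderOf (a : ZMod p) : ℝ)) := by
    apply Finset.filter_congr
    intro p _
    simp [not_lt]
  rw [← hsplit, heq]
  exact add_le_add key le_rfl
end
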